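/- Let a > 0, c > 0, λ ≥ 0, let i ≥ 2 be an integer, let h : ℝ → ℝ be continuous and bounded, and let I : ℝ → ℝ be continuous, bounded, and nonnegative. Define G_j(t) = ∫_{τ ∈ (-∞, t]} h(τ) · exp(-c·∫_τ^t I(s) ds) · exp(-λ(t-τ)) · g_a^j(t - τ) dτ for each integer j ≥ 1. Then for every t ∈ ℝ, G_i is differentiable at t with G_i'(t) = a·(G_{i-1}(t) - G_i(t)) - (c·I(t) + λ)·G_i(t). -/

import Mathlib

open Real MeasureTheory

/-- Erlang density with shape parameter `i` and rate parameter `a`. -/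
noncomputable def erlang (a : ℝ) (i : ℕ) (t : ℝ) : ℝ :=
  a ^ i * t ^ (i - 1) * Real.exp (-a * t) / (Nat.factorial (i - 1))

lemma pow_le_fact_mul_exp (m : ℕ) {y : ℝ} (hy : 0 ≤ y) : y ^ m ≤ m.factorial * Real.exp y := by
  have h1 : y ^ m / m.factorial ≤ Real.exp y := by
    calc y ^ m / m.factorial ≤ ∑ i ∈ Finset.range (m+1), y ^ i / i.factorial := by
          exact Finset.single_le_sum (f := fun i => y ^ i / (i.factorial : ℝ))
            (fun i _ => by positivity) (Finset.self_mem_range_succ m)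
      _ ≤ Real.exp y := Real.sum_le_exp_of_nonneg hy _
  have hm : (0:ℝ) < m.factorial := by positivity
  calc y ^ m = (y ^ m / m.factorial) * m.factorial := by field_simp
    _ ≤ Real.exp y * m.factorial := by gcongr
    _ = m.factorial * Real.exp y := by ring

lemma hasDerivAt_erlang (a : ℝ) (n : ℕ) (v : ℝ) :
    HasDerivAt (erlang a (n+2)) (a * erlang a (n+1) v - a * erlang a (n+2) v) v := by
  have h1 : HasDerivAt (fun v : ℝ => v ^ (n+1)) ((n+1 : ℕ) * v ^ n) v := by
    simpa using hasDerivAt_pow (n+1) v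
  have h2 : HasDerivAt (fun v : ℝ => Real.exp (-a * v)) (-a * Real.exp (-a * v)) v := by
    simpa [mul_comm] using ((hasDerivAt_id v).const_mul (-a)).exp
  have h3 := ((h1.mul h2).const_mul (a ^ (n+2))).div_const ((n+1).factorial : ℝ)
  have heq : (fun v : ℝ => a ^ (n+2) * (v ^ (n+1) * Real.exp (-a * v)) / ((n+1).factorial : ℝ))
      = erlang a (n+2) := by
    funext w; simp [erlang, mul_assoc]
  simp only [Pi.mul_apply] at h3
  rw [heq] at h3
  refine h3.congr_deriv ?_
  simp only [erlang, Nat.add_sub_cancel, Nat.factorial_succ]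
  rw [show n + 2 - 1 = n + 1 from rfl]
  push_cast
  have hfac : ((n+1).factorial : ℝ) = (n+1) * n.factorial := by
    push_cast [Nat.factorial_succ]; ring
  have hf0 : (n.factorial : ℝ) ≠ 0 := by positivity
  rw [hfac]
  field_simp [hfac]
  ring

lemma integrableOn_exp_mul_Iic' {b : ℝ} (hb : 0 < b) (t₀ : ℝ) :
    IntegrableOn (fun τ => Real.exp (b * τ)) (Set.Iic t₀) := by
  have h1 : IntegrableOn Real.exp (Set.Iic (b * t₀)) := integrableOn_exp_Iic _
  rw [← integrable_indicator_iff measurableSet_Iic]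
  have h1' : Integrable ((Set.Iic (b * t₀)).indicator Real.exp) :=
    (integrable_indicator_iff measurableSet_Iic).2 h1
  have h2 : Integrable (fun x => (Set.Iic (b * t₀)).indicator Real.exp (b * x)) :=
    h1'.comp_mul_left' hb.ne'
  refine h2.congr (Filter.Eventually.of_forall fun x => ?_)
  by_cases hx : x ≤ t₀
  · simp [Set.indicator_of_mem, hx, (mul_le_mul_iff_of_pos_left hb).2 hx]
  · have : ¬ (b * x ≤ b * t₀) := by
      exact fun hle => hx ((mul_le_mul_iff_of_pos_left hb).1 hle)
    simp [Set.indicator_of_notMem, hx, this]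

lemma erlang_abs_le {a : ℝ} (ha : 0 < a) (j : ℕ) {t₀ t τ : ℝ}
    (hτ : τ ≤ t₀) (ht : |t - t₀| ≤ 1) :
    |erlang a j (t - τ)| ≤ a ^ j * (2 / a) ^ (j - 1) * Real.exp (2 * a)
      * Real.exp (-(a / 2) * (t₀ - τ)) := by
  set v := t - τ with hv
  have habs : |erlang a j v| = a ^ j * |v| ^ (j-1) * Real.exp (-a * v) / ((j-1).factorial : ℝ) := by
    simp [erlang, abs_div, abs_mul, abs_pow, abs_of_pos ha, abs_of_pos (Real.exp_pos _),
      Nat.abs_cast]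
  have hpow : |v| ^ (j-1) ≤ ((j-1).factorial : ℝ) * (2/a) ^ (j-1) * Real.exp ((a/2) * |v|) := by
    have h0 : ((a/2) * |v|) ^ (j-1) ≤ ((j-1).factorial : ℝ) * Real.exp ((a/2)*|v|) :=
      pow_le_fact_mul_exp _ (by positivity)
    have h2 : |v| ^ (j-1) = ((a/2)*|v|)^(j-1) * (2/a)^(j-1) := by
      rw [← mul_pow]; congr 1; field_simp
    rw [h2]
    calc ((a/2)*|v|)^(j-1) * (2/a)^(j-1)
        ≤ (((j-1).factorial : ℝ) * Real.exp ((a/2)*|v|)) * (2/a)^(j-1) := by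
          gcongr
      _ = ((j-1).factorial : ℝ) * (2/a) ^ (j-1) * Real.exp ((a/2) * |v|) := by ring
  have hexp : (a/2) * |v| + (-a * v) ≤ 2*a + (-(a/2) * (t₀ - τ)) := by
    rcases le_or_gt 0 v with hv0 | hv0
    · rw [abs_of_nonneg hv0]
      obtain ⟨hl, hr⟩ := abs_le.1 ht
      have h1 : v ≥ t₀ - τ - 1 := by simp only [hv]; nlinarith
      nlinarith
    · rw [abs_of_neg hv0]
      obtain ⟨hl, hr⟩ := abs_le.1 ht
      have h1 : v ≥ -1 := by simp only [hv]; nlinarith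
      have h2 : t₀ - τ ≤ 1 := by simp only [hv] at hv0; nlinarith
      nlinarith
  calc |erlang a j v| = a ^ j * |v| ^ (j-1) * Real.exp (-a * v) / ((j-1).factorial : ℝ) := habs
    _ ≤ a ^ j * (((j-1).factorial : ℝ) * (2/a)^(j-1) * Real.exp ((a/2)*|v|)) * Real.exp (-a*v)
          / ((j-1).factorial : ℝ) := by
        gcongr
    _ = a ^ j * (2/a)^(j-1) * (Real.exp ((a/2)*|v|) * Real.exp (-a*v)) := by
        have : ((j-1).factorial : ℝ) ≠ 0 := by positivity
        field_simp
    _ = a ^ j * (2/a)^(j-1) * Real.exp ((a/2)*|v| + (-a*v)) := by rw [Real.exp_add]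
    _ ≤ a ^ j * (2/a)^(j-1) * Real.exp (2*a + (-(a/2)*(t₀-τ))) := by
        gcongr
    _ = a ^ j * (2/a)^(j-1) * Real.exp (2*a) * Real.exp (-(a/2)*(t₀-τ)) := by
        rw [Real.exp_add]; ring

set_option maxHeartbeats 2000000 in
theorem linear_chain_infection_step (a c lam : ℝ) (ha : 0 < a) (hc : 0 < c) (hlam : 0 ≤ lam)
    (i : ℕ) (hi : 2 ≤ i)
    (h I : ℝ → ℝ)
    (hcont : Continuous h) (hbdd : ∃ M : ℝ, ∀ t : ℝ, |h t| ≤ M)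
    (hIcont : Continuous I) (hIbdd : ∃ M : ℝ, ∀ t : ℝ, |I t| ≤ M)
    (hIpos : ∀ t : ℝ, 0 ≤ I t)
    (G : ℕ → ℝ → ℝ)
    (hG : ∀ j : ℕ, 1 ≤ j → ∀ t : ℝ, G j t = ∫ τ in Set.Iic t,
      h τ * Real.exp (-c * ∫ s in τ..t, I s) * Real.exp (-lam * (t - τ)) * erlang a j (t - τ)) :
    ∀ t : ℝ, HasDerivAt (G i) (a * (G (i - 1) t - G i t) - (c * I t + lam) * G i t) t := by
  obtain ⟨n, rfl⟩ : ∃ n, i = n + 2 := ⟨i - 2, by omega⟩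
  obtain ⟨Mh, hMh⟩ := hbdd
  obtain ⟨MI, hMI⟩ := hIbdd
  have hMh0 : 0 ≤ Mh := le_trans (abs_nonneg _) (hMh 0)
  have hMI0 : 0 ≤ MI := le_trans (abs_nonneg _) (hMI 0)
  intro t₀
  -- the integrand, as a function of the parameter `t` and the integration variable `τ`
  set Fj : ℕ → ℝ → ℝ → ℝ := fun j t τ =>
    h τ * Real.exp (-c * ∫ s in τ..t, I s) * Real.exp (-lam * (t - τ)) * erlang a j (t - τ)
    with hFj
  set F' : ℝ → ℝ → ℝ := fun t τ =>
    (a * Fj (n+1) t τ - a * Fj (n+2) t τ) - (c * I t + lam) * Fj (n+2) t τ with hF'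
  -- pointwise derivative in t
  have hderiv : ∀ (τ t : ℝ), HasDerivAt (fun t => Fj (n+2) t τ) (F' t τ) t := by
    intro τ t
    have hInt : HasDerivAt (fun t => ∫ s in τ..t, I s) (I t) t :=
      intervalIntegral.integral_hasDerivAt_right (hIcont.intervalIntegrable _ _)
        (hIcont.stronglyMeasurableAtFilter _ _) hIcont.continuousAt
    have hP : HasDerivAt (fun t => Real.exp (-c * ∫ s in τ..t, I s))
        (Real.exp (-c * ∫ s in τ..t, I s) * (-c * I t)) t := (hInt.const_mul (-c)).exp
    have hQ : HasDerivAt (fun t => Real.exp (-lam * (t - τ)))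
        (Real.exp (-lam * (t - τ)) * (-lam * 1)) t :=
      (((hasDerivAt_id t).sub_const τ).const_mul (-lam)).exp
    have hR : HasDerivAt (fun t => erlang a (n+2) (t - τ))
        ((a * erlang a (n+1) (t - τ) - a * erlang a (n+2) (t - τ)) * 1) t :=
      (hasDerivAt_erlang a n (t - τ)).comp (h := fun t => t - τ) t ((hasDerivAt_id t).sub_const τ)
    have hD := ((hP.const_mul (h τ)).mul hQ).mul hR
    simp only [Pi.mul_apply] at hD
    refine hD.congr_deriv ?_
    simp only [hF', hFj]
    ring
  -- continuity in τ
  have hprim : ∀ t : ℝ, Continuous fun τ => ∫ s in τ..t, I s := by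
    intro t
    have h1 := intervalIntegral.continuous_primitive (μ := volume)
      (fun a b => hIcont.intervalIntegrable a b) t
    have h2 : (fun τ => ∫ s in τ..t, I s) = fun τ => -∫ s in t..τ, I s := by
      funext τ; rw [intervalIntegral.integral_symm]
    rw [h2]; exact h1.neg
  have herlc : ∀ j : ℕ, Continuous (erlang a j) := by
    intro j
    unfold erlang
    continuity
  have hcontτ : ∀ (j : ℕ) (t : ℝ), Continuous (fun τ => Fj j t τ) := by
    intro j t
    simp only [hFj]
    exact ((hcont.mul (Real.continuous_exp.comp ((continuous_const.mul (hprim t))))).mul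
        (Real.continuous_exp.comp (continuous_const.mul (continuous_const.sub continuous_id)))).mul
      ((herlc j).comp (continuous_const.sub continuous_id))
  -- the key pointwise bound
  set K : ℕ → ℝ := fun j =>
    Mh * Real.exp (c * MI) * Real.exp lam * (a ^ j * (2 / a) ^ (j - 1) * Real.exp (2 * a))
    with hK
  have hK0 : ∀ j, 0 ≤ K j := by intro j; simp only [hK]; positivity
  have key : ∀ (j : ℕ) (t τ : ℝ), τ ≤ t₀ → |t - t₀| ≤ 1 →
      |Fj j t τ| ≤ K j * Real.exp (-(a / 2) * (t₀ - τ)) := by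
    intro j t τ hτ ht
    have hPle : Real.exp (-c * ∫ s in τ..t, I s) ≤ Real.exp (c * MI) := by
      apply Real.exp_le_exp.2
      have hsplit : (∫ s in τ..t, I s) = (∫ s in τ..t₀, I s) + ∫ s in t₀..t, I s :=
        (intervalIntegral.integral_add_adjacent_intervals (hIcont.intervalIntegrable _ _)
          (hIcont.intervalIntegrable _ _)).symm
      have h1 : 0 ≤ ∫ s in τ..t₀, I s :=
        intervalIntegral.integral_nonneg hτ (fun s _ => hIpos s)
      have h2 : |∫ s in t₀..t, I s| ≤ MI * |t - t₀| := by
        have := intervalIntegral.norm_integral_le_of_norm_le_const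
          (a := t₀) (b := t) (C := MI) (f := I)
          (fun x _ => by simpa [Real.norm_eq_abs] using hMI x)
        simpa [Real.norm_eq_abs] using this
      obtain ⟨h2l, _⟩ := abs_le.1 h2
      have h3 : MI * |t - t₀| ≤ MI := by nlinarith [abs_nonneg (t - t₀)]
      have h4 : (0:ℝ) ≤ (∫ s in τ..t, I s) + MI := by nlinarith
      nlinarith [mul_nonneg hc.le h4]
    have hQle : Real.exp (-lam * (t - τ)) ≤ Real.exp lam := by
      apply Real.exp_le_exp.2
      obtain ⟨hl, hr⟩ := abs_le.1 ht
      nlinarith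
    have hE := erlang_abs_le ha j hτ ht
    simp only [hFj, hK]
    calc |h τ * Real.exp (-c * ∫ s in τ..t, I s) * Real.exp (-lam * (t - τ)) *
          erlang a j (t - τ)|
        = |h τ| * Real.exp (-c * ∫ s in τ..t, I s) * Real.exp (-lam * (t - τ)) *
          |erlang a j (t - τ)| := by
          rw [abs_mul, abs_mul, abs_mul, abs_of_pos (Real.exp_pos _),
            abs_of_pos (Real.exp_pos _)]
      _ ≤ Mh * Real.exp (c * MI) * Real.exp lam *
          (a ^ j * (2 / a) ^ (j - 1) * Real.exp (2 * a) * Real.exp (-(a / 2) * (t₀ - τ))) := by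
          gcongr <;> first
            | exact hMh0 | exact abs_nonneg _ | exact hMh τ | exact hE | positivity
      _ = Mh * Real.exp (c * MI) * Real.exp lam *
          (a ^ j * (2 / a) ^ (j - 1) * Real.exp (2 * a)) * Real.exp (-(a / 2) * (t₀ - τ)) := by
          ring
  -- integrability of the exponential bound
  have hint_exp : Integrable (fun τ => Real.exp (-(a / 2) * (t₀ - τ)))
      (volume.restrict (Set.Iic t₀)) := by
    have h1 : IntegrableOn (fun τ => Real.exp (a / 2 * τ)) (Set.Iic t₀) :=
      integrableOn_exp_mul_Iic' (by positivity) t₀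
    have h2 := h1.const_mul (Real.exp (-(a / 2) * t₀))
    refine h2.congr ?_
    filter_upwards with τ
    rw [← Real.exp_add]
    ring_nf
  have hint_Fj : ∀ (j : ℕ) (t : ℝ), |t - t₀| ≤ 1 →
      IntegrableOn (fun τ => Fj j t τ) (Set.Iic t₀) := by
    intro j t ht
    refine Integrable.mono' (hint_exp.const_mul (K j))
      ((hcontτ j t).aestronglyMeasurable) ?_
    filter_upwards [ae_restrict_mem measurableSet_Iic] with τ hτ
    simpa [Real.norm_eq_abs] using key j t τ hτ ht
  -- differentiation under the integral sign
  have main := hasDerivAt_integral_of_dominated_loc_of_deriv_le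
    (F := fun t τ => Fj (n+2) t τ) (F' := F')
    (μ := volume.restrict (Set.Iic t₀)) (x₀ := t₀)
    (bound := fun τ => (a * K (n+1) + a * K (n+2) + (c * MI + lam) * K (n+2)) *
      Real.exp (-(a / 2) * (t₀ - τ)))
    (Metric.ball_mem_nhds t₀ one_pos)
    (Filter.Eventually.of_forall fun t => (hcontτ (n+2) t).aestronglyMeasurable)
    (hint_Fj (n+2) t₀ (by simp))
    (by
      have : Continuous fun τ => F' t₀ τ := by
        simp only [hF']
        exact ((continuous_const.mul (hcontτ (n+1) t₀)).sub
          (continuous_const.mul (hcontτ (n+2) t₀))).sub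
          (continuous_const.mul (hcontτ (n+2) t₀))
      exact this.aestronglyMeasurable)
    (by
      filter_upwards [ae_restrict_mem measurableSet_Iic] with τ hτ
      intro t ht
      rw [Metric.mem_ball, Real.dist_eq] at ht
      have ht1 : |t - t₀| ≤ 1 := ht.le
      have k1 := key (n+1) t τ hτ ht1
      have k2 := key (n+2) t τ hτ ht1
      have hIt : c * I t + lam ≤ c * MI + lam := by
        have := le_trans (le_abs_self _) (hMI t)
        nlinarith
      have hIt0 : 0 ≤ c * I t + lam := by
        have := hIpos t
        positivity
      have habs : |F' t τ| ≤ a * |Fj (n+1) t τ| + a * |Fj (n+2) t τ| +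
          (c * I t + lam) * |Fj (n+2) t τ| := by
        simp only [hF']
        calc |a * Fj (n+1) t τ - a * Fj (n+2) t τ - (c * I t + lam) * Fj (n+2) t τ|
            ≤ |a * Fj (n+1) t τ - a * Fj (n+2) t τ| + |(c * I t + lam) * Fj (n+2) t τ| :=
              abs_sub _ _
          _ ≤ |a * Fj (n+1) t τ| + |a * Fj (n+2) t τ| + |(c * I t + lam) * Fj (n+2) t τ| := by
              gcongr; exact abs_sub _ _
          _ = a * |Fj (n+1) t τ| + a * |Fj (n+2) t τ| + (c * I t + lam) * |Fj (n+2) t τ| := by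
              simp only [abs_mul, abs_of_pos ha, abs_of_nonneg hIt0]
      rw [Real.norm_eq_abs]
      calc |F' t τ| ≤ a * |Fj (n+1) t τ| + a * |Fj (n+2) t τ| +
            (c * I t + lam) * |Fj (n+2) t τ| := habs
        _ ≤ a * (K (n+1) * Real.exp (-(a / 2) * (t₀ - τ))) +
            a * (K (n+2) * Real.exp (-(a / 2) * (t₀ - τ))) +
            (c * MI + lam) * (K (n+2) * Real.exp (-(a / 2) * (t₀ - τ))) := by
            gcongr <;> first
              | exact abs_nonneg _ | exact k1 | exact k2 | exact hIt
              | exact mul_nonneg (hK0 _) (Real.exp_pos _).le | positivity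
        _ = (a * K (n+1) + a * K (n+2) + (c * MI + lam) * K (n+2)) *
            Real.exp (-(a / 2) * (t₀ - τ)) := by ring)
    (hint_exp.const_mul _)
    (Filter.Eventually.of_forall fun τ => fun t _ => hderiv τ t)
  obtain ⟨-, hmain⟩ := main
  -- value of the derivative integral
  have hval : (∫ τ in Set.Iic t₀, F' t₀ τ) =
      a * (G (n+1) t₀ - G (n+2) t₀) - (c * I t₀ + lam) * G (n+2) t₀ := by
    have hI1 : IntegrableOn (fun τ => Fj (n+1) t₀ τ) (Set.Iic t₀) :=
      hint_Fj (n+1) t₀ (by simp)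
    have hI2 : IntegrableOn (fun τ => Fj (n+2) t₀ τ) (Set.Iic t₀) :=
      hint_Fj (n+2) t₀ (by simp)
    have e1 : G (n+1) t₀ = ∫ τ in Set.Iic t₀, Fj (n+1) t₀ τ := by
      rw [hG (n+1) (by omega) t₀]
    have e2 : G (n+2) t₀ = ∫ τ in Set.Iic t₀, Fj (n+2) t₀ τ := by
      rw [hG (n+2) (by omega) t₀]
    have ha1 : Integrable (fun τ => a * Fj (n+1) t₀ τ) (volume.restrict (Set.Iic t₀)) :=
      hI1.const_mul a
    have ha2 : Integrable (fun τ => a * Fj (n+2) t₀ τ) (volume.restrict (Set.Iic t₀)) :=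
      hI2.const_mul a
    have ha3 : Integrable (fun τ => (c * I t₀ + lam) * Fj (n+2) t₀ τ)
        (volume.restrict (Set.Iic t₀)) := hI2.const_mul _
    have hsub1 : Integrable (fun τ => a * Fj (n+1) t₀ τ - a * Fj (n+2) t₀ τ)
        (volume.restrict (Set.Iic t₀)) := ha1.sub ha2
    simp only [hF']
    rw [MeasureTheory.integral_sub hsub1 ha3, MeasureTheory.integral_sub ha1 ha2,
      MeasureTheory.integral_const_mul, MeasureTheory.integral_const_mul,
      MeasureTheory.integral_const_mul, e1, e2]
    ring
  -- the moving-endpoint correction term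
  set φ : ℝ → ℝ := fun t => ∫ τ in t₀..t, Fj (n+2) t τ with hφ
  have herl_small : ∀ v : ℝ, |v| ≤ 1 →
      |erlang a (n+2) v| ≤ a ^ (n+2) * Real.exp a * |v| := by
    intro v hv
    have habs : |erlang a (n+2) v| =
        a ^ (n+2) * |v| ^ (n+1) * Real.exp (-a * v) / ((n+1).factorial : ℝ) := by
      simp [erlang, abs_div, abs_mul, abs_pow, abs_of_pos ha, abs_of_pos (Real.exp_pos _),
        Nat.abs_cast]
    have h1 : |v| ^ (n+1) ≤ |v| := by
      calc |v| ^ (n+1) = |v| ^ n * |v| := by ring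
        _ ≤ 1 ^ n * |v| := by gcongr <;> first | exact abs_nonneg v | exact hv
        _ = |v| := by ring
    have h2 : Real.exp (-a * v) ≤ Real.exp a := by
      apply Real.exp_le_exp.2
      obtain ⟨hl, hr⟩ := abs_le.1 hv
      nlinarith
    have h3 : (1 : ℝ) ≤ ((n+1).factorial : ℝ) := by
      exact_mod_cast Nat.one_le_iff_ne_zero.2 (Nat.factorial_ne_zero _)
    calc |erlang a (n+2) v|
        = a ^ (n+2) * |v| ^ (n+1) * Real.exp (-a * v) / ((n+1).factorial : ℝ) := habs
      _ ≤ a ^ (n+2) * |v| * Real.exp a / 1 := by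
          gcongr <;> first | exact h1 | exact h2 | exact h3 | positivity
      _ = a ^ (n+2) * Real.exp a * |v| := by ring
  have hphi : HasDerivAt φ 0 t₀ := by
    rw [hasDerivAt_iff_isLittleO]
    have hsimp : (fun t => φ t - φ t₀ - (t - t₀) • (0:ℝ)) = φ := by
      funext t
      simp [hφ, intervalIntegral.integral_same]
    rw [hsimp]
    have h1 : φ =O[nhds t₀] fun t => (t - t₀) ^ 2 := by
      rw [Asymptotics.isBigO_iff]
      refine ⟨Mh * Real.exp (c * MI) * Real.exp lam * (a ^ (n+2) * Real.exp a), ?_⟩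
      filter_upwards [Metric.ball_mem_nhds t₀ one_pos] with t ht
      rw [Metric.mem_ball, Real.dist_eq] at ht
      have ht1 : |t - t₀| ≤ 1 := ht.le
      have hbound : ∀ τ ∈ Set.uIoc t₀ t, ‖Fj (n+2) t τ‖ ≤
          Mh * Real.exp (c * MI) * Real.exp lam * (a ^ (n+2) * Real.exp a) * |t - t₀| := by
        intro τ hτ
        have hτmem : |t - τ| ≤ |t - t₀| := by
          have habs1 : t - t₀ ≤ |t - t₀| := le_abs_self _
          have habs2 : -|t - t₀| ≤ t - t₀ := neg_abs_le _
          rcases Set.mem_uIoc.1 hτ with ⟨h1', h2'⟩ | ⟨h1', h2'⟩ <;>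
            (rw [abs_le]; constructor <;> linarith)
        have hPle : Real.exp (-c * ∫ s in τ..t, I s) ≤ Real.exp (c * MI) := by
          apply Real.exp_le_exp.2
          have h2 : |∫ s in τ..t, I s| ≤ MI * |t - τ| := by
            have := intervalIntegral.norm_integral_le_of_norm_le_const
              (a := τ) (b := t) (C := MI) (f := I)
              (fun x _ => by simpa [Real.norm_eq_abs] using hMI x)
            simpa [Real.norm_eq_abs] using this
          obtain ⟨h2l, _⟩ := abs_le.1 h2
          have h5 : MI * |t - τ| ≤ MI := by
            nlinarith [abs_nonneg (t - τ), le_trans hτmem ht1]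
          have h4 : (0:ℝ) ≤ (∫ s in τ..t, I s) + MI := by linarith
          nlinarith [mul_nonneg hc.le h4]
        have hQle : Real.exp (-lam * (t - τ)) ≤ Real.exp lam := by
          apply Real.exp_le_exp.2
          obtain ⟨hl, hr⟩ := abs_le.1 (le_trans hτmem ht1)
          nlinarith
        have hEle : |erlang a (n+2) (t - τ)| ≤ a ^ (n+2) * Real.exp a * |t - t₀| :=
          le_trans (herl_small (t - τ) (le_trans hτmem ht1))
            (by gcongr <;> first | exact hτmem | positivity)
        rw [Real.norm_eq_abs]
        simp only [hFj]
        calc |h τ * Real.exp (-c * ∫ s in τ..t, I s) * Real.exp (-lam * (t - τ)) *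
              erlang a (n+2) (t - τ)|
            = |h τ| * Real.exp (-c * ∫ s in τ..t, I s) * Real.exp (-lam * (t - τ)) *
              |erlang a (n+2) (t - τ)| := by
              rw [abs_mul, abs_mul, abs_mul, abs_of_pos (Real.exp_pos _),
                abs_of_pos (Real.exp_pos _)]
          _ ≤ Mh * Real.exp (c * MI) * Real.exp lam * (a ^ (n+2) * Real.exp a * |t - t₀|) := by
              gcongr <;> first
                | exact hMh0 | exact abs_nonneg _ | exact hMh τ | exact hEle | positivity
          _ = Mh * Real.exp (c * MI) * Real.exp lam * (a ^ (n+2) * Real.exp a) * |t - t₀| := by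
              ring
      have := intervalIntegral.norm_integral_le_of_norm_le_const hbound
      rw [Real.norm_eq_abs (φ t)]
      calc |φ t| ≤ Mh * Real.exp (c * MI) * Real.exp lam * (a ^ (n+2) * Real.exp a) *
            |t - t₀| * |t - t₀| := by
            simpa [hφ, abs_sub_comm] using this
        _ = Mh * Real.exp (c * MI) * Real.exp lam * (a ^ (n+2) * Real.exp a) *
            ‖(t - t₀) ^ 2‖ := by
            rw [Real.norm_eq_abs, abs_pow]
            ring
    have h2 : (fun t : ℝ => (t - t₀) ^ 2) =o[nhds t₀] fun t => t - t₀ := by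
      have hb : (fun t : ℝ => t - t₀) =O[nhds t₀] fun t => t - t₀ :=
        Asymptotics.isBigO_refl _ _
      have hl : (fun t : ℝ => t - t₀) =o[nhds t₀] fun _ => (1:ℝ) := by
        rw [Asymptotics.isLittleO_one_iff]
        have : Filter.Tendsto (fun t : ℝ => t - t₀) (nhds t₀) (nhds (t₀ - t₀)) :=
          (continuous_id.sub continuous_const).tendsto t₀
        simpa using this
      have := hb.mul_isLittleO hl
      simpa [pow_two] using this
    exact h1.trans_isLittleO h2
  -- G near t₀ agrees with the fixed-domain integral plus the correction
  have heq : ∀ᶠ t in nhds t₀, G (n+2) t = (∫ τ in Set.Iic t₀, Fj (n+2) t τ) + φ t := by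
    filter_upwards [Metric.ball_mem_nhds t₀ one_pos] with t ht
    rw [Metric.mem_ball, Real.dist_eq] at ht
    have ht1 : |t - t₀| ≤ 1 := ht.le
    have hIic₀ : IntegrableOn (fun τ => Fj (n+2) t τ) (Set.Iic t₀) := hint_Fj (n+2) t ht1
    have hIic : IntegrableOn (fun τ => Fj (n+2) t τ) (Set.Iic t) := by
      have hsub : Set.Iic t ⊆ Set.Iic t₀ ∪ Set.Icc t₀ (t₀ + 1) := by
        intro x hx
        rcases le_or_gt x t₀ with hx' | hx'
        · exact Or.inl hx'
        · refine Or.inr ⟨hx'.le, le_trans hx ?_⟩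
          obtain ⟨hl, hr⟩ := abs_le.1 ht1
          linarith
      refine IntegrableOn.mono_set ?_ hsub
      exact hIic₀.union ((hcontτ (n+2) t).integrableOn_Icc)
    have hsplit := intervalIntegral.integral_Iic_sub_Iic hIic₀ hIic
    rw [hG (n+2) (by omega) t]
    simp only [hFj] at hsplit hφ ⊢
    linarith [hsplit]
  -- conclude
  have hfinal := (hmain.add hphi).congr_of_eventuallyEq heq
  rw [hval] at hfinal
  have hidx : n + 2 - 1 = n + 1 := rfl
  rw [hidx]
  simpa using hfinal
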